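/- arXiv:1606.04046 — 5 statements merged into one kernel-verified Lean document; each statement's English description precedes it below -/
import Mathlib

section
/- For H < 1/2 and integers n ≥ 2, T > 0, there is a constant C not depending on T such that for all t ∈ [0,T], the sum over j = 0, …, ⌊nT⌋ - 1 of |E[(B^H_{(j+1)/n} - B^H_{j/n}) B^H_t]| is at most C ⌊nT⌋^{2H} n^{-2H}. -/
open MeasureTheory Real

/-- Covariance function of fractional Brownian motion with Hurst parameter `H`. -/
noncomputable def fbmCov (H s t : ℝ) : ℝ :=
  (s ^ (2*H) + t ^ (2*H) - |t - s| ^ (2*H)) / 2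

lemma real_rpow_add_le {x y p : ℝ} (hx : 0 ≤ x) (hy : 0 ≤ y) (hp : 0 ≤ p) (hp1 : p ≤ 1) :
    (x + y) ^ p ≤ x ^ p + y ^ p := by
  have h := NNReal.rpow_add_le_add_rpow ⟨x, hx⟩ ⟨y, hy⟩ hp hp1
  have := NNReal.coe_le_coe.2 h
  push_cast [NNReal.coe_rpow] at this
  exact this

lemma abs_rpow_sub_rpow_le {u v p : ℝ} (hu : 0 ≤ u) (hv : 0 ≤ v) (hp : 0 ≤ p) (hp1 : p ≤ 1) :
    |u ^ p - v ^ p| ≤ |u - v| ^ p := by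
  wlog h : v ≤ u generalizing u v
  · rw [abs_sub_comm, abs_sub_comm u v]; exact this hv hu (le_of_not_ge h)
  have h1 : u ^ p ≤ v ^ p + (u - v) ^ p := by
    have := real_rpow_add_le hv (by linarith : (0:ℝ) ≤ u - v) hp hp1
    simpa using this
  have h2 : v ^ p ≤ u ^ p := Real.rpow_le_rpow hv h hp
  rw [abs_of_nonneg (by linarith), abs_of_nonneg (by linarith)]
  linarith

lemma sum_Ico_telescope (f : ℕ → ℝ) {a b : ℕ} (h : a ≤ b) :
    ∑ j ∈ Finset.Ico a b, (f (j+1) - f j) = f b - f a := by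
  rw [Finset.sum_Ico_eq_sub _ h, Finset.sum_range_sub, Finset.sum_range_sub]
  ring

set_option maxHeartbeats 1000000 in
theorem fbm_sum_increment_cov_bound {Ω : Type*} [MeasurableSpace Ω] (P : Measure Ω)
    [IsProbabilityMeasure P]
    (H : ℝ) (hH0 : 0 < H) (hH : H < 1/2)
    (B : ℝ → Ω → ℝ)
    (hint : ∀ s t : ℝ, Integrable (fun ω => B s ω * B t ω) P)
    (hcov : ∀ s t : ℝ, 0 ≤ s → 0 ≤ t → ∫ ω, B s ω * B t ω ∂P = fbmCov H s t)
    (n : ℕ) (hn : 2 ≤ n) :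
    ∃ C > 0, ∀ T > (0:ℝ), ∀ t ∈ Set.Icc (0:ℝ) T,
      ∑ j ∈ Finset.range ⌊(n:ℝ)*T⌋₊,
        |∫ ω, (B (((j:ℝ)+1)/n) ω - B ((j:ℝ)/n) ω) * B t ω ∂P|
      ≤ C * (⌊(n:ℝ)*T⌋₊ : ℝ) ^ (2*H) * (n : ℝ) ^ (-(2*H)) := by
  refine ⟨3, by norm_num, ?_⟩
  intro T hT t ht
  obtain ⟨ht0, htT⟩ := ht
  set p : ℝ := 2 * H with hpdef
  have hp0 : 0 < p := by simp [hpdef]; linarith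
  have hp1 : p ≤ 1 := by simp [hpdef]; linarith
  have hn0 : (0:ℝ) < n := by positivity
  set N := ⌊(n:ℝ)*T⌋₊ with hNdef
  -- the key integral computation
  have key : ∀ a b : ℝ, 0 ≤ a → 0 ≤ b →
      ∫ ω, (B a ω - B b ω) * B t ω ∂P = fbmCov H a t - fbmCov H b t := by
    intro a b ha hb
    simp_rw [sub_mul]
    rw [integral_sub (hint a t) (hint b t), hcov a t ha ht0, hcov b t hb ht0]
  rcases Nat.eq_zero_or_pos N with h0 | hNpos
  · rw [h0]
    simp [Real.zero_rpow (ne_of_gt hp0)]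
  -- main case N ≥ 1
  set f : ℕ → ℝ := fun j => |t - (j:ℝ)/n| ^ p with hfdef
  set g : ℕ → ℝ := fun j => ((j:ℝ)/n) ^ p with hgdef
  set b : ℝ := (N:ℝ) ^ p * (n:ℝ) ^ (-p) with hbdef
  have hb_eq : ((N:ℝ)/n) ^ p = b := by
    rw [hbdef, Real.div_rpow (Nat.cast_nonneg N) hn0.le, Real.rpow_neg hn0.le, div_eq_mul_inv]
  have hbnn : 0 ≤ b := by positivity
  have hN1 : (1:ℝ) ≤ N := by exact_mod_cast hNpos
  have hTb : T ^ p ≤ 2 * b := by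
    have h1 : T < ((N:ℝ)+1)/n := by
      rw [lt_div_iff₀ hn0]
      have := Nat.lt_floor_add_one ((n:ℝ)*T)
      push_cast at this ⊢
      linarith [this]
    have h2 : ((N:ℝ)+1)/n ≤ 2*((N:ℝ)/n) := by
      rw [div_le_iff₀ hn0]
      have : (N:ℝ)+1 ≤ 2*N := by linarith
      field_simp
      nlinarith [hn0]
    have h3 : T ^ p ≤ (2*((N:ℝ)/n)) ^ p :=
      Real.rpow_le_rpow hT.le (by linarith) hp0.le
    have h4 : (2*((N:ℝ)/n)) ^ p = 2 ^ p * ((N:ℝ)/n) ^ p :=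
      Real.mul_rpow (by norm_num) (by positivity)
    have h5 : (2:ℝ) ^ p ≤ 2 := by
      calc (2:ℝ) ^ p ≤ 2 ^ (1:ℝ) := Real.rpow_le_rpow_of_exponent_le one_le_two hp1
      _ = 2 := Real.rpow_one 2
    calc T ^ p ≤ 2 ^ p * ((N:ℝ)/n) ^ p := by rw [← h4]; exact h3
    _ ≤ 2 * b := by rw [hb_eq]; exact mul_le_mul_of_nonneg_right h5 (by rw [← hb_eq]; positivity)
  have htp : t ^ p ≤ 2 * b :=
    le_trans (Real.rpow_le_rpow ht0 htT hp0.le) hTb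
  have hNn_le_T : (N:ℝ)/n ≤ T := by
    rw [div_le_iff₀ hn0]
    have := Nat.floor_le (by positivity : (0:ℝ) ≤ (n:ℝ)*T)
    linarith [this]
  have hfN : f N ≤ 2 * b := by
    have hNn0 : (0:ℝ) ≤ (N:ℝ)/n := by positivity
    have habs : |t - (N:ℝ)/n| ≤ T := abs_le.2 ⟨by linarith, by linarith⟩
    calc f N ≤ T ^ p := Real.rpow_le_rpow (abs_nonneg _) habs hp0.le
    _ ≤ 2 * b := hTb
  -- termwise bound
  have term_bound : ∀ j ∈ Finset.range N,
      |∫ ω, (B (((j:ℝ)+1)/n) ω - B ((j:ℝ)/n) ω) * B t ω ∂P|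
      ≤ (g (j+1) - g j)/2 + |f (j+1) - f j|/2 := by
    intro j _
    have hcast : ((j:ℝ)+1) = ((j+1:ℕ):ℝ) := by push_cast; ring
    rw [key _ _ (by positivity) (by positivity)]
    have hXnn : g j ≤ g (j+1) := by
      apply Real.rpow_le_rpow (by positivity) _ hp0.le
      gcongr
      push_cast
      linarith
    have hexp : fbmCov H (((j:ℝ)+1)/n) t - fbmCov H ((j:ℝ)/n) t
        = ((g (j+1) - g j) - (f (j+1) - f j))/2 := by
      simp only [fbmCov, hfdef, hgdef, hpdef]
      rw [hcast]
      ring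
    rw [hexp]
    calc |((g (j+1) - g j) - (f (j+1) - f j))/2|
        ≤ (|g (j+1) - g j| + |f (j+1) - f j|)/2 := by
          rw [abs_div]
          simp only [abs_two]
          gcongr
          exact abs_sub _ _
    _ = (g (j+1) - g j)/2 + |f (j+1) - f j|/2 := by
          rw [abs_of_nonneg (by linarith)]; ring
  have hsum1 : ∑ j ∈ Finset.range N, (g (j+1) - g j) = b := by
    rw [Finset.sum_range_sub]
    have : g 0 = 0 := by
      simp [hgdef, Real.zero_rpow (ne_of_gt hp0)]
    rw [this, sub_zero]
    exact hb_eq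
  -- bound on the sum of |Δf|
  set m := min N ⌊(n:ℝ)*t⌋₊ with hmdef
  have hmN : m ≤ N := min_le_left _ _
  have part1 : ∑ j ∈ Finset.Ico 0 m, |f (j+1) - f j| ≤ 2 * b := by
    have hdec : ∀ j ∈ Finset.Ico 0 m, |f (j+1) - f j| = f j - f (j+1) := by
      intro j hj
      simp only [Finset.mem_Ico] at hj
      have hj1 : ((j:ℝ)+1) ≤ (n:ℝ)*t := by
        have h1 : j + 1 ≤ ⌊(n:ℝ)*t⌋₊ := le_trans hj.2 (min_le_right _ _)
        have h2 : (⌊(n:ℝ)*t⌋₊:ℝ) ≤ (n:ℝ)*t := Nat.floor_le (by positivity)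
        have : ((j:ℝ)+1) ≤ (⌊(n:ℝ)*t⌋₊:ℝ) := by exact_mod_cast h1
        linarith
      have hx1 : ((j:ℝ)+1)/n ≤ t := by rw [div_le_iff₀ hn0]; linarith
      have hx0 : (j:ℝ)/n ≤ t := by rw [div_le_iff₀ hn0]; nlinarith
      have hfj : f j = (t - (j:ℝ)/n) ^ p := by
        simp only [hfdef]; rw [abs_of_nonneg (by linarith)]
      have hfj1 : f (j+1) = (t - ((j:ℝ)+1)/n) ^ p := by
        simp only [hfdef]; push_cast; rw [abs_of_nonneg (by linarith)]
      have hdiv : (j:ℝ)/n ≤ ((j:ℝ)+1)/n := by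
        rw [div_le_div_iff₀ hn0 hn0]; nlinarith
      have hle : f (j+1) ≤ f j := by
        rw [hfj, hfj1]
        exact Real.rpow_le_rpow (by linarith) (by linarith) hp0.le
      rw [abs_sub_comm, abs_of_nonneg (by linarith)]
    rw [Finset.sum_congr rfl hdec]
    have : ∑ j ∈ Finset.Ico 0 m, (f j - f (j+1))
        = -(∑ j ∈ Finset.Ico 0 m, (f (j+1) - f j)) := by
      rw [← Finset.sum_neg_distrib]; congr 1; ext j; ring
    rw [this, sum_Ico_telescope f (Nat.zero_le m), neg_sub]
    have hf0 : f 0 = t ^ p := by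
      simp only [hfdef]
      norm_num
      rw [abs_of_nonneg ht0]
    have hfm : 0 ≤ f m := by simp only [hfdef]; positivity
    linarith [htp]
  have part2 : ∑ j ∈ Finset.Ico m N, |f (j+1) - f j| ≤ 3 * b := by
    rcases eq_or_lt_of_le hmN with heq | hlt
    · rw [heq, Finset.Ico_self, Finset.sum_empty]; linarith
    · have hmfl : m = ⌊(n:ℝ)*t⌋₊ := by omega
      rw [Finset.sum_eq_sum_Ico_succ_bot hlt]
      have hmid : |f (m+1) - f m| ≤ b := by
        have h1 : |f (m+1) - f m| ≤ |(|t - ((m+1:ℕ):ℝ)/n| - |t - (m:ℝ)/n|)| ^ p := by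
          simp only [hfdef]
          exact abs_rpow_sub_rpow_le (abs_nonneg _) (abs_nonneg _) hp0.le hp1
        have h2 : |(|t - ((m+1:ℕ):ℝ)/n| - |t - (m:ℝ)/n|)| ≤ 1/n := by
          calc |(|t - ((m+1:ℕ):ℝ)/n| - |t - (m:ℝ)/n|)|
              ≤ |(t - ((m+1:ℕ):ℝ)/n) - (t - (m:ℝ)/n)| := abs_abs_sub_abs_le_abs_sub _ _
          _ = 1/n := by
              push_cast
              rw [show (t - ((m:ℝ)+1)/n) - (t - (m:ℝ)/n) = -(1/n) by field_simp; ring]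
              rw [abs_neg, abs_of_nonneg (by positivity)]
        have h3 : |(|t - ((m+1:ℕ):ℝ)/n| - |t - (m:ℝ)/n|)| ^ p ≤ (1/(n:ℝ)) ^ p :=
          Real.rpow_le_rpow (abs_nonneg _) h2 hp0.le
        have h4 : (1/(n:ℝ)) ^ p = (n:ℝ) ^ (-p) := by
          rw [Real.div_rpow zero_le_one hn0.le, Real.one_rpow, Real.rpow_neg hn0.le, one_div]
        have h5 : (n:ℝ) ^ (-p) ≤ b := by
          rw [hbdef]
          nth_rewrite 1 [← one_mul ((n:ℝ) ^ (-p))]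
          apply mul_le_mul_of_nonneg_right _ (by positivity)
          exact Real.one_le_rpow hN1 hp0.le
        calc |f (m+1) - f m| ≤ (1/(n:ℝ)) ^ p := le_trans h1 h3
        _ = (n:ℝ) ^ (-p) := h4
        _ ≤ b := h5
      have hinc : ∀ j ∈ Finset.Ico (m+1) N, |f (j+1) - f j| = f (j+1) - f j := by
        intro j hj
        simp only [Finset.mem_Ico] at hj
        have hjt : (n:ℝ)*t ≤ j := by
          have h1 : (n:ℝ)*t < ⌊(n:ℝ)*t⌋₊ + 1 := Nat.lt_floor_add_one _
          have h2 : (⌊(n:ℝ)*t⌋₊:ℝ) + 1 ≤ (j:ℝ) := by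
            have : m + 1 ≤ j := hj.1
            rw [hmfl] at this
            exact_mod_cast this
          linarith
        have hx0 : t ≤ (j:ℝ)/n := by rw [le_div_iff₀ hn0]; linarith
        have hx1 : t ≤ ((j:ℝ)+1)/n := by rw [le_div_iff₀ hn0]; nlinarith
        have hfj : f j = ((j:ℝ)/n - t) ^ p := by
          simp only [hfdef]; rw [abs_sub_comm, abs_of_nonneg (by linarith)]
        have hfj1 : f (j+1) = (((j:ℝ)+1)/n - t) ^ p := by
          simp only [hfdef]; push_cast; rw [abs_sub_comm, abs_of_nonneg (by linarith)]
        have hdiv : (j:ℝ)/n ≤ ((j:ℝ)+1)/n := by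
          rw [div_le_div_iff₀ hn0 hn0]; nlinarith
        have hle : f j ≤ f (j+1) := by
          rw [hfj, hfj1]
          exact Real.rpow_le_rpow (by linarith) (by linarith) hp0.le
        rw [abs_of_nonneg (by linarith)]
      rw [Finset.sum_congr rfl hinc, sum_Ico_telescope f (by omega : m + 1 ≤ N)]
      have hfm1 : 0 ≤ f (m+1) := by simp only [hfdef]; positivity
      linarith [hfN]
  have hsum2 : ∑ j ∈ Finset.range N, |f (j+1) - f j| ≤ 5 * b := by
    rw [Finset.range_eq_Ico, ← Finset.sum_Ico_consecutive _ (Nat.zero_le m) hmN]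
    linarith [part1, part2]
  calc ∑ j ∈ Finset.range N, |∫ ω, (B (((j:ℝ)+1)/n) ω - B ((j:ℝ)/n) ω) * B t ω ∂P|
      ≤ ∑ j ∈ Finset.range N, ((g (j+1) - g j)/2 + |f (j+1) - f j|/2) :=
        Finset.sum_le_sum term_bound
  _ = (∑ j ∈ Finset.range N, (g (j+1) - g j))/2
      + (∑ j ∈ Finset.range N, |f (j+1) - f j|)/2 := by
        rw [Finset.sum_add_distrib, Finset.sum_div, Finset.sum_div]
  _ ≤ b/2 + (5*b)/2 := by rw [hsum1]; linarith [hsum2]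
  _ = 3 * (N:ℝ) ^ p * (n:ℝ) ^ (-p) := by rw [hbdef]; ring
end

section
/- Fix H < 1/2, T > 0, and two integers n > m ≥ 2. For each integer j ≥ 0, let k(j) = max{i ≥ 0 : i/m ≤ j/n}. Then there is a constant C depending only on T and H such that the sum over j = 0, …, ⌊nT⌋ - 1 of |E[(B^H_{(j+1)/n} - B^H_{j/n}) B^H_{k(j)/m}]| is at most C m^{1-2H}. -/
open MeasureTheory Real

lemma rpow_sub_le_sub_rpow' {a b p : ℝ} (hp0 : 0 ≤ p) (hp1 : p ≤ 1)
    (ha : 0 ≤ a) (hab : a ≤ b) : b ^ p - a ^ p ≤ (b - a) ^ p := by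
  have hx : (0:ℝ) ≤ b - a := by linarith
  have h := NNReal.rpow_add_le_add_rpow (b - a).toNNReal a.toNNReal hp0 hp1
  have h' : ((((b-a).toNNReal + a.toNNReal) ^ p : NNReal) : ℝ)
      ≤ (((b-a).toNNReal ^ p : NNReal) : ℝ) + ((a.toNNReal ^ p : NNReal) : ℝ) := by
    exact_mod_cast h
  rw [← Real.toNNReal_add hx ha] at h'
  simp only [NNReal.coe_rpow, Real.coe_toNNReal _ (by linarith : (0:ℝ) ≤ b - a + a),
    Real.coe_toNNReal _ hx, Real.coe_toNNReal _ ha] at h'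
  have hba : b - a + a = b := by ring
  rw [hba] at h'
  linarith

theorem fbm_two_partitions_bound_one {Ω : Type*} [MeasurableSpace Ω] (P : Measure Ω)
    [IsProbabilityMeasure P]
    (H : ℝ) (hH0 : 0 < H) (hH : H < 1/2)
    (B : ℝ → Ω → ℝ)
    (hint : ∀ s t : ℝ, Integrable (fun ω => B s ω * B t ω) P)
    (hcov : ∀ s t : ℝ, 0 ≤ s → 0 ≤ t → ∫ ω, B s ω * B t ω ∂P = fbmCov H s t)
    (T : ℝ) (hT : 0 < T) :
    ∃ C > 0, ∀ m n : ℕ, 2 ≤ m → m < n →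
      ∑ j ∈ Finset.range ⌊(n:ℝ)*T⌋₊,
        |∫ ω, (B (((j:ℝ)+1)/n) ω - B ((j:ℝ)/n) ω) * B ((((j*m)/n : ℕ) : ℝ)/m) ω ∂P|
      ≤ C * (m : ℝ) ^ (1 - 2*H) := by
  have h2H0 : (0:ℝ) < 2*H := by linarith
  have h2H1 : 2*H < 1 := by linarith
  refine ⟨T + 1, by linarith, fun m n hm hmn => ?_⟩
  have hm0 : (0:ℝ) < m := by exact_mod_cast (by omega : 0 < m)
  have hn0 : (0:ℝ) < n := by exact_mod_cast (by omega : 0 < n)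
  have hm1 : (1:ℝ) ≤ m := by exact_mod_cast (by omega : 1 ≤ m)
  set N := ⌊(n:ℝ)*T⌋₊ with hN
  set k : ℕ → ℕ := fun j => (j*m)/n with hk
  set x : ℕ → ℝ := fun j => (j:ℝ)/n - (k j : ℝ)/m with hx
  set g : ℕ → ℝ := fun j => ((j:ℝ)/n) ^ (2*H) with hg
  set f : ℕ → ℝ := fun j => (x j) ^ (2*H) with hf
  -- basic facts
  have hum : ∀ j : ℕ, (k j : ℝ)/m ≤ (j:ℝ)/n := by
    intro j
    rw [div_le_div_iff₀ hm0 hn0]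
    have h := Nat.div_mul_le_self (j*m) n
    simp only [hk]
    exact_mod_cast h
  have hxnn : ∀ j : ℕ, 0 ≤ x j := by
    intro j; simp only [hx]; linarith [hum j]
  have hkmono : ∀ j : ℕ, k j ≤ k (j+1) := by
    intro j; simp only [hk]
    exact Nat.div_le_div_right (by nlinarith)
  have hkstep : ∀ j : ℕ, k (j+1) ≤ k j + 1 := by
    intro j; simp only [hk]
    have h1 : (j+1)*m ≤ j*m + n := by nlinarith
    calc (j+1)*m / n ≤ (j*m + n)/n := Nat.div_le_div_right h1
      _ = j*m/n + 1 := Nat.add_div_right _ (by omega)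
  -- per-term bound
  have hterm : ∀ j : ℕ,
      |∫ ω, (B (((j:ℝ)+1)/n) ω - B ((j:ℝ)/n) ω) * B ((((j*m)/n : ℕ) : ℝ)/m) ω ∂P|
      ≤ (g (j+1) - g j)/2 + (f (j+1) - f j)/2
        + ((k (j+1) : ℝ) - (k j : ℝ)) * (m:ℝ)^(-(2*H)) / 2 := by
    intro j
    set s : ℝ := ((j:ℝ)+1)/n with hs
    set t : ℝ := (j:ℝ)/n with ht
    set u : ℝ := (k j : ℝ)/m with hu
    have hs0 : 0 ≤ s := by positivity
    have ht0 : 0 ≤ t := by positivity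
    have hu0 : 0 ≤ u := by positivity
    have hut : u ≤ t := hum j
    have hts : t ≤ s := by rw [hs, ht]; gcongr; linarith
    -- compute the integral
    have hI : (∫ ω, (B s ω - B t ω) * B u ω ∂P) = fbmCov H s u - fbmCov H t u := by
      simp_rw [sub_mul]
      rw [integral_sub (hint s u) (hint t u), hcov s u hs0 hu0, hcov t u ht0 hu0]
    have hcovdiff : fbmCov H s u - fbmCov H t u
        = ((s^(2*H) - t^(2*H)) - ((s-u)^(2*H) - (t-u)^(2*H)))/2 := by
      unfold fbmCov
      rw [abs_of_nonpos (by linarith : u - s ≤ 0), abs_of_nonpos (by linarith : u - t ≤ 0),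
        neg_sub, neg_sub]
      ring
    have hA : 0 ≤ s^(2*H) - t^(2*H) :=
      sub_nonneg.2 (Real.rpow_le_rpow ht0 hts h2H0.le)
    have hB : 0 ≤ (s-u)^(2*H) - (t-u)^(2*H) :=
      sub_nonneg.2 (Real.rpow_le_rpow (by linarith) (by linarith) h2H0.le)
    -- bound the B-bracket
    have hsu : s - u = x j + 1/n := by rw [hs, hu, hx]; ring
    have htu : t - u = x j := by rw [ht, hu, hx]
    have hab : x (j+1) ≤ x j + 1/n := by
      simp only [hx]
      have : (k j : ℝ) ≤ (k (j+1) : ℝ) := by exact_mod_cast hkmono j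
      have hc : ((j+1:ℕ):ℝ) = (j:ℝ)+1 := by push_cast; ring
      rw [hc]
      have h1 : ((j:ℝ)+1)/n = (j:ℝ)/n + 1/n := by ring
      rw [h1]
      have h2 : (k (j+1) : ℝ)/m ≥ (k j : ℝ)/m := by gcongr
      linarith
    have hba : (x j + 1/n) - x (j+1) = ((k (j+1) : ℝ) - (k j : ℝ))/m := by
      simp only [hx]
      have hc : ((j+1:ℕ):ℝ) = (j:ℝ)+1 := by push_cast; ring
      rw [hc]; ring
    have hsub : (x j + 1/n)^(2*H) - (x (j+1))^(2*H)
        ≤ (((k (j+1) : ℝ) - (k j : ℝ))/m)^(2*H) := by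
      rw [← hba]
      exact rpow_sub_le_sub_rpow' h2H0.le h2H1.le (hxnn (j+1)) hab
    have hd : (((k (j+1) : ℝ) - (k j : ℝ))/m)^(2*H)
        ≤ ((k (j+1) : ℝ) - (k j : ℝ)) * (m:ℝ)^(-(2*H)) := by
      have hcase : k (j+1) = k j ∨ k (j+1) = k j + 1 := by
        have := hkmono j; have := hkstep j; omega
      rcases hcase with h | h
      · rw [h]
        simp [Real.zero_rpow h2H0.ne']
      · rw [h]
        have h1 : ((k j + 1 : ℕ):ℝ) - (k j : ℝ) = 1 := by push_cast; ring
        rw [h1, one_mul, one_div, Real.inv_rpow hm0.le, ← Real.rpow_neg hm0.le]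
    -- combine
    rw [hI, hcovdiff]
    have habs : |((s^(2*H) - t^(2*H)) - ((s-u)^(2*H) - (t-u)^(2*H)))/2|
        ≤ (s^(2*H) - t^(2*H))/2 + ((s-u)^(2*H) - (t-u)^(2*H))/2 := by
      rw [abs_div]
      have h1 := abs_sub (s^(2*H) - t^(2*H)) ((s-u)^(2*H) - (t-u)^(2*H))
      rw [abs_of_nonneg hA, abs_of_nonneg hB] at h1
      rw [abs_of_pos (by norm_num : (0:ℝ) < 2)]
      linarith
    have hgA : s^(2*H) - t^(2*H) = g (j+1) - g j := by
      simp only [hg, hs, ht]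
      have hc : ((j+1:ℕ):ℝ) = (j:ℝ)+1 := by push_cast; ring
      rw [hc]
    have hBb : (s-u)^(2*H) - (t-u)^(2*H)
        ≤ (f (j+1) - f j) + ((k (j+1) : ℝ) - (k j : ℝ)) * (m:ℝ)^(-(2*H)) := by
      rw [hsu, htu]
      simp only [hf]
      have := hsub.trans hd
      linarith
    calc |((s^(2*H) - t^(2*H)) - ((s-u)^(2*H) - (t-u)^(2*H)))/2|
        ≤ (s^(2*H) - t^(2*H))/2 + ((s-u)^(2*H) - (t-u)^(2*H))/2 := habs
      _ ≤ (g (j+1) - g j)/2 + ((f (j+1) - f j) + ((k (j+1) : ℝ) - (k j : ℝ)) * (m:ℝ)^(-(2*H)))/2 := by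
          rw [hgA]; gcongr
      _ = (g (j+1) - g j)/2 + (f (j+1) - f j)/2
          + ((k (j+1) : ℝ) - (k j : ℝ)) * (m:ℝ)^(-(2*H)) / 2 := by ring
  -- sum the bound
  have hsum : ∑ j ∈ Finset.range N,
      |∫ ω, (B (((j:ℝ)+1)/n) ω - B ((j:ℝ)/n) ω) * B ((((j*m)/n : ℕ) : ℝ)/m) ω ∂P|
      ≤ (g N - g 0)/2 + (f N - f 0)/2 + ((k N : ℝ) - (k 0 : ℝ)) * (m:ℝ)^(-(2*H)) / 2 := by
    calc ∑ j ∈ Finset.range N,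
        |∫ ω, (B (((j:ℝ)+1)/n) ω - B ((j:ℝ)/n) ω) * B ((((j*m)/n : ℕ) : ℝ)/m) ω ∂P|
        ≤ ∑ j ∈ Finset.range N, ((g (j+1) - g j)/2 + (f (j+1) - f j)/2
            + ((k (j+1) : ℝ) - (k j : ℝ)) * (m:ℝ)^(-(2*H)) / 2) :=
          Finset.sum_le_sum fun j _ => hterm j
      _ = (g N - g 0)/2 + (f N - f 0)/2 + ((k N : ℝ) - (k 0 : ℝ)) * (m:ℝ)^(-(2*H)) / 2 := by
          rw [Finset.sum_add_distrib, Finset.sum_add_distrib]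
          rw [← Finset.sum_div, Finset.sum_range_sub g]
          rw [← Finset.sum_div, Finset.sum_range_sub f]
          rw [← Finset.sum_div, ← Finset.sum_mul,
            Finset.sum_range_sub (fun j => (k j : ℝ))]
  -- boundary values
  have hg0 : g 0 = 0 := by
    simp only [hg, Nat.cast_zero, zero_div]
    exact Real.zero_rpow h2H0.ne'
  have hk0 : k 0 = 0 := by simp [hk]
  have hx0 : x 0 = 0 := by simp [hx, hk0]
  have hf0 : f 0 = 0 := by
    simp only [hf]
    rw [hx0]
    exact Real.zero_rpow h2H0.ne'
  -- final bounds
  have hNn : (N:ℝ) ≤ n * T := Nat.floor_le (by positivity)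
  have hgN : g N ≤ 1 + T := by
    have hNT : (N:ℝ)/n ≤ T := by rw [div_le_iff₀ hn0]; linarith
    by_cases hc : (N:ℝ)/n ≤ 1
    · exact le_trans (Real.rpow_le_one (by positivity) hc h2H0.le) (by linarith)
    · push_neg at hc
      calc ((N:ℝ)/n)^(2*H) ≤ ((N:ℝ)/n)^(1:ℝ) :=
            Real.rpow_le_rpow_of_exponent_le hc.le h2H1.le
        _ = (N:ℝ)/n := Real.rpow_one _
        _ ≤ 1 + T := by linarith
  have hfN : f N ≤ 1 := by
    have hmod : N*m < (k N + 1)*n := by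
      simp only [hk]
      have h2 : (N*m) % n < n := Nat.mod_lt _ (by omega)
      calc N*m = n*(N*m/n) + (N*m)%n := (Nat.div_add_mod _ _).symm
        _ < n*(N*m/n) + n := Nat.add_lt_add_left h2 _
        _ = (N*m/n + 1)*n := by ring
    have h1 : (N:ℝ)*m < ((k N:ℝ)+1)*n := by exact_mod_cast hmod
    have hx1 : x N ≤ 1 := by
      simp only [hx]
      rw [div_sub_div _ _ hn0.ne' hm0.ne', div_le_one (by positivity)]
      nlinarith
    exact Real.rpow_le_one (hxnn N) hx1 h2H0.le
  have hkN : (k N : ℝ) * (m:ℝ)^(-(2*H)) ≤ T * (m:ℝ)^(1-2*H) := by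
    have h1 : (k N:ℝ)*n ≤ (N:ℝ)*m := by
      have := Nat.div_mul_le_self (N*m) n
      simp only [hk]
      exact_mod_cast this
    have hk1 : (k N:ℝ) ≤ T * m := by nlinarith
    have hM : (m:ℝ)^(1-2*H) = m * (m:ℝ)^(-(2*H)) := by
      rw [show (1-2*H) = 1 + -(2*H) by ring, Real.rpow_add hm0, Real.rpow_one]
    calc (k N : ℝ) * (m:ℝ)^(-(2*H)) ≤ (T*m) * (m:ℝ)^(-(2*H)) := by
          exact mul_le_mul_of_nonneg_right hk1 (Real.rpow_nonneg hm0.le _)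
      _ = T * (m:ℝ)^(1-2*H) := by rw [hM]; ring
  have hM1 : (1:ℝ) ≤ (m:ℝ)^(1-2*H) := by
    have := Real.rpow_le_rpow_of_exponent_le hm1 (by linarith : (0:ℝ) ≤ 1-2*H)
    rwa [Real.rpow_zero] at this
  rw [hg0, hk0, hf0] at hsum
  simp only [Nat.cast_zero, sub_zero] at hsum
  calc ∑ j ∈ Finset.range N,
      |∫ ω, (B (((j:ℝ)+1)/n) ω - B ((j:ℝ)/n) ω) * B ((((j*m)/n : ℕ) : ℝ)/m) ω ∂P|
      ≤ g N / 2 + f N / 2 + (k N : ℝ) * (m:ℝ)^(-(2*H)) / 2 := hsum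
    _ ≤ (1+T)/2 + 1/2 + T * (m:ℝ)^(1-2*H) / 2 := by
        linarith [hgN, hfN, hkN]
    _ ≤ (T + 1) * (m:ℝ)^(1-2*H) := by
        have h := mul_le_mul_of_nonneg_left hM1 (by linarith : (0:ℝ) ≤ T/2 + 1)
        linarith
end

section
/- Fix H < 1/2, T > 0, and two integers n > m ≥ 2, and for each j ≥ 0 let k(j) = max{i ≥ 0 : i/m ≤ j/n}. Then there is a constant C depending only on T and H such that the sum over j = 0, …, ⌊nT⌋ - 1 of |E[(B^H_{(j+1)/n} - B^H_{j/n}) · ((B^H_{j/n} + B^H_{(j+1)/n})/2 - B^H_{k(j)/m})]| is at most C m^{1-2H}. -/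
open MeasureTheory Real

/-- Subadditivity of `rpow` with exponent in `[0,1]`, difference form. -/
lemma fbm_aux_sub_rpow {α : ℝ} (hα0 : 0 ≤ α) (hα1 : α ≤ 1) {x y : ℝ} (hy : 0 ≤ y)
    (hxy : y ≤ x) : x ^ α - y ^ α ≤ (x - y) ^ α := by
  have hx : 0 ≤ x := hy.trans hxy
  have h := NNReal.rpow_add_le_add_rpow (x - y).toNNReal y.toNNReal hα0 hα1
  rw [← Real.toNNReal_add (sub_nonneg.2 hxy) hy, sub_add_cancel] at h
  have h' := NNReal.coe_le_coe.2 h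
  push_cast [NNReal.coe_rpow, Real.coe_toNNReal _ hx, Real.coe_toNNReal _ hy,
    Real.coe_toNNReal _ (sub_nonneg.2 hxy)] at h'
  linarith

/-- The key expectation computation for fBm increments. -/
lemma fbm_aux_exp {Ω : Type*} [MeasurableSpace Ω] (P : Measure Ω) (H : ℝ) (hH0 : 0 < H)
    (B : ℝ → Ω → ℝ)
    (hint : ∀ s t : ℝ, Integrable (fun ω => B s ω * B t ω) P)
    (hcov : ∀ s t : ℝ, 0 ≤ s → 0 ≤ t → ∫ ω, B s ω * B t ω ∂P = fbmCov H s t)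
    {a b c : ℝ} (hc : 0 ≤ c) (hca : c ≤ a) (hab : a ≤ b) :
    ∫ ω, (B b ω - B a ω) * ((B a ω + B b ω)/2 - B c ω) ∂P
      = ((b - c) ^ (2*H) - (a - c) ^ (2*H)) / 2 := by
  have ha : 0 ≤ a := hc.trans hca
  have hb : 0 ≤ b := ha.trans hab
  have hfun : (fun ω => (B b ω - B a ω) * ((B a ω + B b ω)/2 - B c ω))
      = fun ω => ((B b ω * B b ω / 2 - B a ω * B a ω / 2 - B b ω * B c ω) + B a ω * B c ω) := by
    funext ω; ring
  have i1 : Integrable (fun ω => B b ω * B b ω / 2) P := (hint b b).div_const 2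
  have i2 : Integrable (fun ω => B a ω * B a ω / 2) P := (hint a a).div_const 2
  have i3 : Integrable (fun ω => B b ω * B b ω / 2 - B a ω * B a ω / 2) P := i1.sub i2
  have i4 : Integrable (fun ω => B b ω * B b ω / 2 - B a ω * B a ω / 2 - B b ω * B c ω) P :=
    i3.sub (hint b c)
  rw [hfun, integral_add i4 (hint a c), integral_sub i3 (hint b c), integral_sub i1 i2,
    integral_div, integral_div, hcov b b hb hb, hcov a a ha ha, hcov b c hb hc, hcov a c ha hc]
  simp only [fbmCov, sub_self, abs_zero, Real.zero_rpow (by positivity : 2*H ≠ 0)]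
  rw [show |c - b| = b - c from by
      rw [abs_sub_comm]; exact abs_of_nonneg (sub_nonneg.2 (hca.trans hab)),
    show |c - a| = a - c from by rw [abs_sub_comm]; exact abs_of_nonneg (sub_nonneg.2 hca)]
  ring

theorem fbm_two_partitions_bound_two {Ω : Type*} [MeasurableSpace Ω] (P : Measure Ω)
    [IsProbabilityMeasure P]
    (H : ℝ) (hH0 : 0 < H) (hH : H < 1/2)
    (B : ℝ → Ω → ℝ)
    (hint : ∀ s t : ℝ, Integrable (fun ω => B s ω * B t ω) P)
    (hcov : ∀ s t : ℝ, 0 ≤ s → 0 ≤ t → ∫ ω, B s ω * B t ω ∂P = fbmCov H s t)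
    (T : ℝ) (hT : 0 < T) :
    ∃ C > 0, ∀ m n : ℕ, 2 ≤ m → m < n →
      ∑ j ∈ Finset.range ⌊(n:ℝ)*T⌋₊,
        |∫ ω, (B (((j:ℝ)+1)/n) ω - B ((j:ℝ)/n) ω) *
              ((B ((j:ℝ)/n) ω + B (((j:ℝ)+1)/n) ω)/2 - B ((((j*m)/n : ℕ) : ℝ)/m) ω) ∂P|
      ≤ C * (m : ℝ) ^ (1 - 2*H) := by
  have hα0 : (0:ℝ) ≤ 2*H := by linarith
  have hα1 : 2*H ≤ 1 := by linarith
  refine ⟨T + 1, by linarith, fun m n hm hmn => ?_⟩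
  have hnpos : 0 < n := lt_of_le_of_lt (Nat.zero_le m) hmn
  have hn0 : (0:ℝ) < n := by exact_mod_cast hnpos
  have hm0 : (0:ℝ) < m := by exact_mod_cast lt_of_lt_of_le two_pos hm
  have hm2 : (2:ℝ) ≤ m := by exact_mod_cast hm
  set J := ⌊(n:ℝ)*T⌋₊ with hJdef
  have hca : ∀ j : ℕ, ((j*m/n : ℕ):ℝ)/m ≤ (j:ℝ)/n := fun j => by
    rw [div_le_div_iff₀ hm0 hn0]; exact_mod_cast Nat.div_mul_le_self (j*m) n
  have hcmono : ∀ j : ℕ, (j*m/n : ℕ) ≤ ((j+1)*m/n : ℕ) := fun j =>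
    Nat.div_le_div_right (Nat.mul_le_mul_right m (Nat.le_succ j))
  have hstep : ∀ j : ℕ, ((j+1)*m/n : ℕ) ≤ (j*m/n : ℕ) + 1 := fun j => by
    calc ((j+1)*m)/n = (j*m + m)/n := by ring_nf
      _ ≤ (j*m + n)/n := Nat.div_le_div_right (by omega)
      _ = j*m/n + 1 := Nat.add_div_right _ hnpos
  set g : ℕ → ℝ := fun j => ((j:ℝ)/n - ((j*m/n : ℕ):ℝ)/m)^(2*H) with hgdef
  set d : ℕ → ℝ := fun j => ((((j+1)*m/n : ℕ):ℝ)/m - ((j*m/n : ℕ):ℝ)/m)^(2*H) with hddef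
  set q := (1/(m:ℝ))^(2*H) with hqdef
  have hq0 : 0 ≤ q := Real.rpow_nonneg (by positivity) _
  have key : ∀ j : ℕ,
      |∫ ω, (B (((j:ℝ)+1)/n) ω - B ((j:ℝ)/n) ω) *
            ((B ((j:ℝ)/n) ω + B (((j:ℝ)+1)/n) ω)/2 - B ((((j*m)/n : ℕ) : ℝ)/m) ω) ∂P|
      ≤ (d j + (g (j+1) - g j))/2 := by
    intro j
    have hcj : (0:ℝ) ≤ ((j*m/n:ℕ):ℝ)/m := by positivity
    have hcaj := hca j
    have hab : (j:ℝ)/n ≤ ((j:ℝ)+1)/n := by gcongr; linarith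
    rw [fbm_aux_exp P H hH0 B hint hcov hcj hcaj hab]
    have hy : (0:ℝ) ≤ (j:ℝ)/n - ((j*m/n:ℕ):ℝ)/m := sub_nonneg.2 hcaj
    have hxy : (j:ℝ)/n - ((j*m/n:ℕ):ℝ)/m ≤ ((j:ℝ)+1)/n - ((j*m/n:ℕ):ℝ)/m :=
      sub_le_sub_right hab _
    rw [abs_of_nonneg (by
      have := Real.rpow_le_rpow hy hxy hα0
      linarith)]
    have hca' : (((j+1)*m/n:ℕ):ℝ)/m ≤ ((j:ℝ)+1)/n := by
      have h := hca (j+1); push_cast at h; linarith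
    have hmono : ((j*m/n:ℕ):ℝ)/m ≤ (((j+1)*m/n:ℕ):ℝ)/m :=
      (div_le_div_iff_of_pos_right hm0).2 (by exact_mod_cast hcmono j)
    have h2 := fbm_aux_sub_rpow hα0 hα1 (sub_nonneg.2 hca')
      (by linarith : ((j:ℝ)+1)/n - (((j+1)*m/n:ℕ):ℝ)/m ≤ ((j:ℝ)+1)/n - ((j*m/n:ℕ):ℝ)/m)
    have e : ((j:ℝ)+1)/n - ((j*m/n:ℕ):ℝ)/m - (((j:ℝ)+1)/n - (((j+1)*m/n:ℕ):ℝ)/m)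
        = (((j+1)*m/n:ℕ):ℝ)/m - ((j*m/n:ℕ):ℝ)/m := by ring
    rw [e] at h2
    simp only [hgdef, hddef]
    push_cast
    linarith
  have hd : ∀ j : ℕ, d j ≤ ((((j+1)*m/n:ℕ):ℝ) - ((j*m/n:ℕ):ℝ)) * q := by
    intro j
    have h01 : ((j+1)*m/n : ℕ) = j*m/n ∨ ((j+1)*m/n : ℕ) = j*m/n + 1 := by
      have h1 := hcmono j; have h2 := hstep j; omega
    rcases h01 with h | h
    · simp only [hddef, h, sub_self, Real.zero_rpow (by positivity : 2*H ≠ 0), zero_mul, le_refl]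
    · simp only [hddef, h]
      push_cast
      rw [show (((j*m/n:ℕ):ℝ) + 1)/m - ((j*m/n:ℕ):ℝ)/m = 1/(m:ℝ) from by ring,
        show ((j*m/n:ℕ):ℝ) + 1 - ((j*m/n:ℕ):ℝ) = 1 from by ring, one_mul, hqdef]
  have hsum_d : ∑ j ∈ Finset.range J, d j ≤ ((J*m/n:ℕ):ℝ) * q := by
    calc ∑ j ∈ Finset.range J, d j
        ≤ ∑ j ∈ Finset.range J, ((((j+1)*m/n:ℕ):ℝ) - ((j*m/n:ℕ):ℝ)) * q :=
          Finset.sum_le_sum fun j _ => hd j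
      _ = (∑ j ∈ Finset.range J, ((((j+1)*m/n:ℕ):ℝ) - ((j*m/n:ℕ):ℝ))) * q :=
          (Finset.sum_mul _ _ _).symm
      _ = (((J*m/n:ℕ):ℝ) - ((0*m/n:ℕ):ℝ)) * q := by
          rw [Finset.sum_range_sub (fun j => ((j*m/n:ℕ):ℝ))]
      _ = ((J*m/n:ℕ):ℝ) * q := by norm_num
  have hkJ : ((J*m/n:ℕ):ℝ) ≤ T * m := by
    have h1 : ((J*m/n:ℕ):ℝ) ≤ ((J:ℝ) * m)/n := by
      rw [le_div_iff₀ hn0]; exact_mod_cast Nat.div_mul_le_self (J*m) n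
    have h2 : (J:ℝ) ≤ (n:ℝ)*T := Nat.floor_le (by positivity)
    calc ((J*m/n:ℕ):ℝ) ≤ (J:ℝ)*m/n := h1
      _ ≤ ((n:ℝ)*T)*m/n := by gcongr
      _ = T*m := by field_simp
  have hgJ : g J ≤ q := by
    have hnat : J*m < n*(J*m/n + 1) := by
      have h1 := Nat.div_add_mod (J*m) n
      have h2 := Nat.mod_lt (J*m) hnpos
      rw [Nat.mul_succ]
      omega
    have hy : (0:ℝ) ≤ (J:ℝ)/n - ((J*m/n:ℕ):ℝ)/m := sub_nonneg.2 (hca J)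
    have hub : (J:ℝ)/n - ((J*m/n:ℕ):ℝ)/m ≤ 1/(m:ℝ) := by
      rw [div_sub_div _ _ hn0.ne' hm0.ne', div_le_div_iff₀ (by positivity) hm0]
      have h3 : (J:ℝ)*m < n*(((J*m/n:ℕ):ℝ) + 1) := by exact_mod_cast hnat
      nlinarith [hm0.le]
    simp only [hgdef, hqdef]
    exact Real.rpow_le_rpow hy hub hα0
  have hg0 : g 0 = 0 := by
    simp only [hgdef]
    norm_num [Real.zero_rpow (by positivity : 2*H ≠ 0)]
  have hmq : (m:ℝ) * q = (m:ℝ)^(1-2*H) := by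
    rw [hqdef, one_div, Real.inv_rpow hm0.le, show (1:ℝ) - 2*H = 1 + (-(2*H)) from by ring,
      Real.rpow_add hm0, Real.rpow_one, Real.rpow_neg hm0.le]
  refine le_trans (Finset.sum_le_sum fun j _ => key j) ?_
  calc ∑ j ∈ Finset.range J, (d j + (g (j+1) - g j))/2
      = (∑ j ∈ Finset.range J, d j + (g J - g 0))/2 := by
        rw [← Finset.sum_div, Finset.sum_add_distrib, Finset.sum_range_sub g]
    _ ≤ (T*m*q + q)/2 := by
        have h := mul_le_mul_of_nonneg_right hkJ hq0
        rw [hg0]; linarith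
    _ ≤ (T+1) * ((m:ℝ)*q) := by
        have hlin : T*m + 1 ≤ 2*((T+1)*m) := by nlinarith [hT.le, hm2]
        have h2 := mul_le_mul_of_nonneg_left hlin hq0
        nlinarith
    _ = (T+1) * (m:ℝ)^(1-2*H) := by rw [hmq]
end

section
/- Fix H < 1/2, T > 0, two integers n > m ≥ 2, and an index 0 ≤ i ≤ ⌊nT⌋ - 1; let k(i) = max{l ≥ 0 : l/m ≤ i/n}. Then there is a constant C depending only on T and H such that the sum over j = 0, …, ⌊nT⌋ - 1 of |E[(B^H_{(j+1)/n} - B^H_{j/n}) · ((B^H_{i/n} + B^H_{(i+1)/n})/2 - B^H_{k(i)/m})]| is at most C m^{-2H}. -/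
open MeasureTheory Real

/-- Four point concavity inequality for `x ^ p`, `0 ≤ p ≤ 1`. -/
lemma fourPoint {p : ℝ} (hp0 : 0 ≤ p) (hp1 : p ≤ 1) {a b c : ℝ}
    (ha : 0 ≤ a) (hab : a ≤ b) (hc : 0 ≤ c) :
    (b + c) ^ p + a ^ p ≤ (a + c) ^ p + b ^ p := by
  rcases eq_or_lt_of_le (show a ≤ b + c by linarith) with h | h
  · have hc0 : c = 0 := by linarith
    have hab' : a = b := by linarith
    subst hc0; subst hab'
    simp
  · have hb0 : 0 ≤ b := le_trans ha hab
    set D := b + c - a with hD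
    have hD0 : 0 < D := by simp only [hD]; linarith
    set l := c / D with hl'
    set μ := (b - a) / D with hμ'
    have hl : 0 ≤ l := div_nonneg hc hD0.le
    have hμ : 0 ≤ μ := div_nonneg (by linarith) hD0.le
    have hlμ : l + μ = 1 := by
      rw [hl', hμ', ← add_div]
      rw [show c + (b - a) = D by rw [hD]; ring]
      exact div_self hD0.ne'
    have hconc := Real.concaveOn_rpow hp0 hp1
    have hmem1 : a ∈ Set.Ici (0:ℝ) := ha
    have hmem2 : b + c ∈ Set.Ici (0:ℝ) := by simp; linarith
    have h1 := hconc.2 hmem1 hmem2 hl hμ hlμ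
    have h2 := hconc.2 hmem1 hmem2 hμ hl (by linarith)
    have e1 : l • a + μ • (b + c) = b := by
      simp only [smul_eq_mul, hl', hμ']
      field_simp
      ring
    have e2 : μ • a + l • (b + c) = a + c := by
      simp only [smul_eq_mul, hl', hμ']
      field_simp
      ring
    rw [e1] at h1
    rw [e2] at h2
    simp only [smul_eq_mul] at h1 h2
    have key : (b + c) ^ p + a ^ p
        = (l * a ^ p + μ * (b + c) ^ p) + (μ * a ^ p + l * (b + c) ^ p) := by
      linear_combination (a ^ p + (b + c) ^ p) * hlμ.symm
    linarith

lemma rpow_sub_le {p : ℝ} (hp0 : 0 < p) (hp1 : p ≤ 1) {a b : ℝ}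
    (ha : 0 ≤ a) (hab : a ≤ b) : b ^ p - a ^ p ≤ (b - a) ^ p := by
  have h := fourPoint hp0.le hp1 (a := 0) (b := a) (c := b - a) le_rfl ha (by linarith)
  rw [Real.zero_rpow hp0.ne', zero_add, add_zero] at h
  have : a + (b - a) = b := by ring
  rw [this] at h
  linarith
noncomputable def Gfun (p u t x : ℝ) : ℝ := |t - x| ^ p - |u - x| ^ p

lemma Gfun_mono1 {p : ℝ} (hp0 : 0 < p) (hp1 : p ≤ 1) {u t x y : ℝ}
    (hut : u ≤ t) (hxy : x ≤ y) (hyu : y ≤ u) : Gfun p u t x ≤ Gfun p u t y := by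
  unfold Gfun
  rw [abs_of_nonneg (by linarith), abs_of_nonneg (by linarith),
      abs_of_nonneg (by linarith), abs_of_nonneg (by linarith)]
  have h := fourPoint hp0.le hp1 (a := u - y) (b := t - y) (c := y - x)
    (by linarith) (by linarith) (by linarith)
  rw [show t - y + (y - x) = t - x by ring, show u - y + (y - x) = u - x by ring] at h
  linarith

lemma Gfun_mono2 {p : ℝ} (hp0 : 0 < p) (hp1 : p ≤ 1) {u t x y : ℝ}
    (hux : u ≤ x) (hxy : x ≤ y) (hyt : y ≤ t) : Gfun p u t y ≤ Gfun p u t x := by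
  unfold Gfun
  rw [abs_of_nonneg (show (0:ℝ) ≤ t - y by linarith), abs_of_nonpos (show u - y ≤ (0:ℝ) by linarith),
      abs_of_nonneg (show (0:ℝ) ≤ t - x by linarith), abs_of_nonpos (show u - x ≤ (0:ℝ) by linarith),
      neg_sub, neg_sub]
  have h1 : (t - y) ^ p ≤ (t - x) ^ p :=
    Real.rpow_le_rpow (by linarith) (by linarith) hp0.le
  have h2 : (x - u) ^ p ≤ (y - u) ^ p :=
    Real.rpow_le_rpow (by linarith) (by linarith) hp0.le
  linarith

lemma Gfun_mono3 {p : ℝ} (hp0 : 0 < p) (hp1 : p ≤ 1) {u t x y : ℝ}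
    (hut : u ≤ t) (htx : t ≤ x) (hxy : x ≤ y) : Gfun p u t x ≤ Gfun p u t y := by
  unfold Gfun
  rw [abs_of_nonpos (by linarith), abs_of_nonpos (by linarith),
      abs_of_nonpos (by linarith), abs_of_nonpos (by linarith), neg_sub, neg_sub, neg_sub, neg_sub]
  have h := fourPoint hp0.le hp1 (a := x - t) (b := x - u) (c := y - x)
    (by linarith) (by linarith) (by linarith)
  rw [show x - u + (y - x) = y - u by ring, show x - t + (y - x) = y - t by ring] at h
  linarith

lemma Gfun_bound {p : ℝ} (hp0 : 0 < p) (hp1 : p ≤ 1) {u t : ℝ} (hut : u ≤ t) (x : ℝ) :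
    |Gfun p u t x| ≤ (t - u) ^ p := by
  unfold Gfun
  have h1 : |abs (t - x) - abs (u - x)| ≤ t - u := by
    have h2 : |t - x - (u - x)| = t - u := by
      rw [show t - x - (u - x) = t - u by ring]
      exact abs_of_nonneg (by linarith)
    exact h2 ▸ abs_abs_sub_abs_le_abs_sub (t - x) (u - x)
  rcases le_total (|u - x|) (|t - x|) with h | h
  · rw [abs_of_nonneg (by
      have := Real.rpow_le_rpow (abs_nonneg (u - x)) h hp0.le
      linarith)]
    calc |t - x| ^ p - |u - x| ^ p ≤ (|t - x| - |u - x|) ^ p :=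
          rpow_sub_le hp0 hp1 (abs_nonneg _) h
      _ ≤ (t - u) ^ p := by
          apply Real.rpow_le_rpow (by linarith) _ hp0.le
          rw [abs_le] at h1; linarith [h1.2]
  · rw [abs_of_nonpos (by
      have := Real.rpow_le_rpow (abs_nonneg (t - x)) h hp0.le
      linarith), neg_sub]
    calc |u - x| ^ p - |t - x| ^ p ≤ (|u - x| - |t - x|) ^ p :=
          rpow_sub_le hp0 hp1 (abs_nonneg _) h
      _ ≤ (t - u) ^ p := by
          apply Real.rpow_le_rpow (by linarith) _ hp0.le
          rw [abs_le] at h1; linarith [h1.1]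

/-- Total-variation style telescoping bound for a three-piece monotone function. -/
lemma tv_bound (G : ℝ → ℝ) (u t M : ℝ) (hut : u ≤ t)
    (h1 : ∀ ⦃x y : ℝ⦄, x ≤ y → y ≤ u → G x ≤ G y)
    (h2 : ∀ ⦃x y : ℝ⦄, u ≤ x → x ≤ y → y ≤ t → G y ≤ G x)
    (h3 : ∀ ⦃x y : ℝ⦄, t ≤ x → x ≤ y → G x ≤ G y)
    (hM : ∀ x, |G x| ≤ M)
    (x : ℕ → ℝ) (hx : ∀ j, x j ≤ x (j+1)) (N : ℕ) :
    ∑ j ∈ Finset.range N, |G (x (j+1)) - G (x j)| ≤ 6 * M := by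
  set f1 : ℕ → ℝ := fun j => G (min (x j) u) with hf1
  set f2 : ℕ → ℝ := fun j => G (max u (min (x j) t)) with hf2
  set f3 : ℕ → ℝ := fun j => G (max (x j) t) with hf3
  have hid : ∀ y : ℝ, G y = G (min y u) + G (max u (min y t)) + G (max y t) - G u - G t := by
    intro y
    rcases le_total y u with h | h
    · rw [min_eq_left h, min_eq_left (le_trans h hut), max_eq_left h, max_eq_right (le_trans h hut)]
      ring
    · rcases le_total y t with h' | h'
      · rw [min_eq_right h, min_eq_left h', max_eq_right h, max_eq_right h']
        ring
      · rw [min_eq_right h, min_eq_right h', max_eq_right hut, max_eq_left h']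
        ring
  have key : ∀ j, |G (x (j+1)) - G (x j)|
      ≤ (f1 (j+1) - f1 j) + (f2 j - f2 (j+1)) + (f3 (j+1) - f3 j) := by
    intro j
    have hdecomp : G (x (j+1)) - G (x j)
        = (f1 (j+1) - f1 j) + (f2 (j+1) - f2 j) + (f3 (j+1) - f3 j) := by
      rw [hf1, hf2, hf3]; simp only
      rw [hid (x (j+1)), hid (x j)]; ring
    have e1 : f1 j ≤ f1 (j+1) :=
      h1 (min_le_min (hx j) le_rfl) (min_le_right _ _)
    have e2 : f2 (j+1) ≤ f2 j :=
      h2 (le_max_left _ _) (max_le_max le_rfl (min_le_min (hx j) le_rfl))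
        (max_le hut (min_le_right _ _))
    have e3 : f3 j ≤ f3 (j+1) :=
      h3 (le_max_right _ _) (max_le_max (hx j) le_rfl)
    rw [hdecomp]
    calc |f1 (j+1) - f1 j + (f2 (j+1) - f2 j) + (f3 (j+1) - f3 j)|
        ≤ |f1 (j+1) - f1 j + (f2 (j+1) - f2 j)| + |f3 (j+1) - f3 j| := abs_add_le _ _
      _ ≤ |f1 (j+1) - f1 j| + |f2 (j+1) - f2 j| + |f3 (j+1) - f3 j| := by
          have := abs_add_le (f1 (j+1) - f1 j) (f2 (j+1) - f2 j); linarith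
      _ = (f1 (j+1) - f1 j) + (f2 j - f2 (j+1)) + (f3 (j+1) - f3 j) := by
          rw [abs_of_nonneg (by linarith), abs_of_nonpos (by linarith),
              abs_of_nonneg (by linarith)]
          ring
  calc ∑ j ∈ Finset.range N, |G (x (j+1)) - G (x j)|
      ≤ ∑ j ∈ Finset.range N,
          ((f1 (j+1) - f1 j) + (f2 j - f2 (j+1)) + (f3 (j+1) - f3 j)) :=
        Finset.sum_le_sum fun j _ => key j
    _ = (f1 N - f1 0) + (f2 0 - f2 N) + (f3 N - f3 0) := by
        rw [Finset.sum_add_distrib, Finset.sum_add_distrib,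
            Finset.sum_range_sub f1, Finset.sum_range_sub' f2, Finset.sum_range_sub f3]
    _ ≤ 6 * M := by
        have b1 := abs_le.1 (hM (min (x N) u))
        have b2 := abs_le.1 (hM (min (x 0) u))
        have b3 := abs_le.1 (hM (max u (min (x N) t)))
        have b4 := abs_le.1 (hM (max u (min (x 0) t)))
        have b5 := abs_le.1 (hM (max (x N) t))
        have b6 := abs_le.1 (hM (max (x 0) t))
        simp only [hf1, hf2, hf3]
        linarith [b1.1, b1.2, b2.1, b2.2, b3.1, b3.2, b4.1, b4.2, b5.1, b5.2, b6.1, b6.2]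


theorem fbm_two_partitions_bound_three {Ω : Type*} [MeasurableSpace Ω] (P : Measure Ω)
    [IsProbabilityMeasure P]
    (H : ℝ) (hH0 : 0 < H) (hH : H < 1/2)
    (B : ℝ → Ω → ℝ)
    (hint : ∀ s t : ℝ, Integrable (fun ω => B s ω * B t ω) P)
    (hcov : ∀ s t : ℝ, 0 ≤ s → 0 ≤ t → ∫ ω, B s ω * B t ω ∂P = fbmCov H s t)
    (T : ℝ) (hT : 0 < T) :
    ∃ C > 0, ∀ m n : ℕ, 2 ≤ m → m < n → ∀ i : ℕ, i < ⌊(n:ℝ)*T⌋₊ →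
      ∑ j ∈ Finset.range ⌊(n:ℝ)*T⌋₊,
        |∫ ω, (B (((j:ℝ)+1)/n) ω - B ((j:ℝ)/n) ω) *
              ((B ((i:ℝ)/n) ω + B (((i:ℝ)+1)/n) ω)/2 - B ((((i*m)/n : ℕ) : ℝ)/m) ω) ∂P|
      ≤ C * (m : ℝ) ^ (-(2*H)) := by
  refine ⟨5, by norm_num, ?_⟩
  intro m n hm hmn i hi
  have hmℕ : 0 < m := by omega
  have hnℕ : 0 < n := by omega
  have hm0 : (0:ℝ) < m := by exact_mod_cast hmℕ
  have hn0 : (0:ℝ) < n := by exact_mod_cast hnℕ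
  have hp0 : (0:ℝ) < 2*H := by linarith
  have hp1 : (2*H) ≤ 1 := by linarith
  set N := ⌊(n:ℝ)*T⌋₊ with hN
  set k : ℕ := (i*m)/n with hk
  set u : ℝ := (k:ℝ)/m with hu
  set s1 : ℝ := (i:ℝ)/n with hs1
  set s2 : ℝ := ((i:ℝ)+1)/n with hs2
  have hu0 : 0 ≤ u := by positivity
  have hs10 : 0 ≤ s1 := by positivity
  have hs20 : 0 ≤ s2 := by positivity
  have hus1 : u ≤ s1 := by
    rw [hu, hs1, div_le_div_iff₀ hm0 hn0]
    have h := Nat.div_mul_le_self (i*m) n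
    have h' : ((k:ℝ)) * n ≤ (i:ℝ) * m := by
      rw [hk]; exact_mod_cast h
    linarith
  have hs12 : s1 ≤ s2 := by
    rw [hs1, hs2]
    gcongr
    linarith
  have hus2 : u ≤ s2 := le_trans hus1 hs12
  have h1m : s1 - u ≤ 1/m := by
    have h2 : i*m < (k+1)*n := by
      rw [hk]; exact (Nat.div_lt_iff_lt_mul hnℕ).1 (Nat.lt_succ_self _)
    have hc : (i:ℝ)*m < ((k:ℝ)+1)*n := by exact_mod_cast h2
    rw [hs1, hu, div_sub_div _ _ hn0.ne' hm0.ne', div_le_div_iff₀ (by positivity) hm0]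
    have key : (i:ℝ)*m - n*k ≤ n := by linarith
    have := mul_le_mul_of_nonneg_right key hm0.le
    linarith
  have h2m : s2 - u ≤ 2/m := by
    have hnm : (1:ℝ)/n ≤ 1/m := by
      apply one_div_le_one_div_of_le hm0
      exact_mod_cast hmn.le
    have hss : s2 = s1 + 1/n := by rw [hs1, hs2]; ring
    have h2 : (2:ℝ)/m = 1/m + 1/m := by ring
    rw [hss, h2]
    linarith
  -- the per-term estimate
  have hterm : ∀ j : ℕ,
      |∫ ω, (B (((j:ℝ)+1)/n) ω - B ((j:ℝ)/n) ω) * ((B s1 ω + B s2 ω)/2 - B u ω) ∂P|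
        ≤ (1/4) * |Gfun (2*H) u s1 (((j:ℝ)+1)/n) - Gfun (2*H) u s1 ((j:ℝ)/n)|
          + (1/4) * |Gfun (2*H) u s2 (((j:ℝ)+1)/n) - Gfun (2*H) u s2 ((j:ℝ)/n)| := by
    intro j
    set a : ℝ := (j:ℝ)/n with ha
    set b : ℝ := ((j:ℝ)+1)/n with hb
    have ha0 : 0 ≤ a := by positivity
    have hb0 : 0 ≤ b := by positivity
    have hIb : Integrable
        (fun ω => B b ω * B s1 ω / 2 + B b ω * B s2 ω / 2 - B b ω * B u ω) P :=
      (((hint b s1).div_const 2).add ((hint b s2).div_const 2)).sub (hint b u)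
    have hIa : Integrable
        (fun ω => B a ω * B s1 ω / 2 + B a ω * B s2 ω / 2 - B a ω * B u ω) P :=
      (((hint a s1).div_const 2).add ((hint a s2).div_const 2)).sub (hint a u)
    have e : (fun ω => (B b ω - B a ω) * ((B s1 ω + B s2 ω)/2 - B u ω))
        = fun ω => (B b ω * B s1 ω / 2 + B b ω * B s2 ω / 2 - B b ω * B u ω)
            - (B a ω * B s1 ω / 2 + B a ω * B s2 ω / 2 - B a ω * B u ω) := by
      funext ω; ring
    have hI : ∫ ω, (B b ω - B a ω) * ((B s1 ω + B s2 ω)/2 - B u ω) ∂P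
        = fbmCov H b s1 / 2 + fbmCov H b s2 / 2 - fbmCov H b u
          - (fbmCov H a s1 / 2 + fbmCov H a s2 / 2 - fbmCov H a u) := by
      have hIb2 : Integrable (fun ω => B b ω * B s1 ω / 2 + B b ω * B s2 ω / 2) P :=
        ((hint b s1).div_const 2).add ((hint b s2).div_const 2)
      have hIa2 : Integrable (fun ω => B a ω * B s1 ω / 2 + B a ω * B s2 ω / 2) P :=
        ((hint a s1).div_const 2).add ((hint a s2).div_const 2)
      have hIb3 : Integrable (fun ω => B b ω * B s1 ω / 2) P := (hint b s1).div_const 2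
      have hIb4 : Integrable (fun ω => B b ω * B s2 ω / 2) P := (hint b s2).div_const 2
      have hIa3 : Integrable (fun ω => B a ω * B s1 ω / 2) P := (hint a s1).div_const 2
      have hIa4 : Integrable (fun ω => B a ω * B s2 ω / 2) P := (hint a s2).div_const 2
      rw [e, integral_sub hIb hIa,
          integral_sub hIb2 (hint b u), integral_add hIb3 hIb4,
          integral_sub hIa2 (hint a u), integral_add hIa3 hIa4,
          integral_div, integral_div, integral_div, integral_div,
          hcov b s1 hb0 hs10, hcov b s2 hb0 hs20, hcov b u hb0 hu0,
          hcov a s1 ha0 hs10, hcov a s2 ha0 hs20, hcov a u ha0 hu0]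
    have halg : fbmCov H b s1 / 2 + fbmCov H b s2 / 2 - fbmCov H b u
          - (fbmCov H a s1 / 2 + fbmCov H a s2 / 2 - fbmCov H a u)
        = -(1/4) * ((Gfun (2*H) u s1 b - Gfun (2*H) u s1 a)
            + (Gfun (2*H) u s2 b - Gfun (2*H) u s2 a)) := by
      simp only [fbmCov, Gfun]; ring
    rw [hI, halg]
    have habs := abs_add_le (Gfun (2*H) u s1 b - Gfun (2*H) u s1 a)
      (Gfun (2*H) u s2 b - Gfun (2*H) u s2 a)
    rw [abs_mul]
    have : |(-(1/4) : ℝ)| = 1/4 := by norm_num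
    rw [this]
    linarith
  -- telescoping bounds for the two G-sums
  have hS : ∀ t : ℝ, u ≤ t →
      ∑ j ∈ Finset.range N, |Gfun (2*H) u t (((j:ℝ)+1)/n) - Gfun (2*H) u t ((j:ℝ)/n)|
        ≤ 6 * ((t - u) ^ (2*H)) := by
    intro t hut
    have htv := tv_bound (Gfun (2*H) u t) u t ((t - u) ^ (2*H)) hut
      (fun x y hxy hyu => Gfun_mono1 hp0 hp1 hut hxy hyu)
      (fun x y hux hxy hyt => Gfun_mono2 hp0 hp1 hux hxy hyt)
      (fun x y htx hxy => Gfun_mono3 hp0 hp1 hut htx hxy)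
      (fun x => Gfun_bound hp0 hp1 hut x)
      (fun j => (j:ℝ)/n)
      (fun j => by
        show ((j:ℕ):ℝ)/n ≤ (((j+1:ℕ)):ℝ)/n
        gcongr
        exact_mod_cast Nat.le_succ j) N
    refine le_trans (le_of_eq (Finset.sum_congr rfl fun j _ => ?_)) htv
    norm_cast
  have hmpow : 0 ≤ (m:ℝ) ^ (-(2*H)) := Real.rpow_nonneg hm0.le _
  have hminv : ((1:ℝ)/m) ^ (2*H) = (m:ℝ) ^ (-(2*H)) := by
    rw [Real.rpow_neg hm0.le, one_div, Real.inv_rpow hm0.le]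
  have hM1 : (s1 - u) ^ (2*H) ≤ (m:ℝ) ^ (-(2*H)) := by
    rw [← hminv]
    exact Real.rpow_le_rpow (by linarith) h1m hp0.le
  have hM2 : (s2 - u) ^ (2*H) ≤ 2 * (m:ℝ) ^ (-(2*H)) := by
    have step1 : (s2 - u) ^ (2*H) ≤ ((2:ℝ)/m) ^ (2*H) :=
      Real.rpow_le_rpow (by linarith) h2m hp0.le
    have step2 : ((2:ℝ)/m) ^ (2*H) = (2:ℝ)^(2*H) * ((1:ℝ)/m) ^ (2*H) := by
      rw [div_eq_mul_inv, Real.mul_rpow (by norm_num) (by positivity), one_div]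
    have h2p : (2:ℝ)^(2*H) ≤ 2 := by
      calc (2:ℝ)^(2*H) ≤ (2:ℝ)^(1:ℝ) := Real.rpow_le_rpow_of_exponent_le one_le_two hp1
        _ = 2 := Real.rpow_one 2
    have hfm : 0 ≤ ((1:ℝ)/m) ^ (2*H) := Real.rpow_nonneg (by positivity) _
    calc (s2 - u) ^ (2*H) ≤ (2:ℝ)^(2*H) * ((1:ℝ)/m) ^ (2*H) := by rw [← step2]; exact step1
      _ ≤ 2 * ((1:ℝ)/m) ^ (2*H) := mul_le_mul_of_nonneg_right h2p hfm
      _ = 2 * (m:ℝ) ^ (-(2*H)) := by rw [hminv]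
  have hS1 := hS s1 hus1
  have hS2 := hS s2 hus2
  calc ∑ j ∈ Finset.range N,
        |∫ ω, (B (((j:ℝ)+1)/n) ω - B ((j:ℝ)/n) ω) * ((B s1 ω + B s2 ω)/2 - B u ω) ∂P|
      ≤ ∑ j ∈ Finset.range N,
          ((1/4) * |Gfun (2*H) u s1 (((j:ℝ)+1)/n) - Gfun (2*H) u s1 ((j:ℝ)/n)|
            + (1/4) * |Gfun (2*H) u s2 (((j:ℝ)+1)/n) - Gfun (2*H) u s2 ((j:ℝ)/n)|) :=
        Finset.sum_le_sum fun j _ => hterm j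
    _ = (1/4) * (∑ j ∈ Finset.range N,
          |Gfun (2*H) u s1 (((j:ℝ)+1)/n) - Gfun (2*H) u s1 ((j:ℝ)/n)|)
        + (1/4) * (∑ j ∈ Finset.range N,
          |Gfun (2*H) u s2 (((j:ℝ)+1)/n) - Gfun (2*H) u s2 ((j:ℝ)/n)|) := by
        rw [Finset.sum_add_distrib, Finset.mul_sum, Finset.mul_sum]
    _ ≤ 5 * (m:ℝ) ^ (-(2*H)) := by linarith
end

section
/- Let B^H be a fractional Brownian motion with H = 1/(4ℓ+2) for an integer ℓ ≥ 1, let C : ℝ² → ℝ be continuous with C(a,a) = 0 for all a, and define R_n(t) = Σ_{j=0}^{⌊nt⌋-1} C(B^H_{j/n}, B^H_{(j+1)/n}) (B^H_{(j+1)/n} - B^H_{j/n})^{4ℓ+2}. Then for every T > 0 and ε > 0, P(sup_{0≤t≤T} |R_n(t)| > ε) → 0 as n → ∞; that is, R_n converges to 0 in probability uniformly on compact sets. -/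
open MeasureTheory ProbabilityTheory Real

open scoped NNReal ENNReal

lemma aux_integrable_abs_pow_gauss {b : ℝ} (hb : 0 < b) (m : ℕ) :
    Integrable (fun x : ℝ => |x| ^ m * Real.exp (-b * x ^ 2)) := by
  have hIoi : IntegrableOn (fun x : ℝ => |x| ^ m * Real.exp (-b * x ^ 2)) (Set.Ioi 0) := by
    have h := integrableOn_rpow_mul_exp_neg_mul_sq hb (s := (m:ℝ)) (lt_of_lt_of_le (by norm_num) (Nat.cast_nonneg m))
    refine h.congr_fun (fun x hx => ?_) measurableSet_Ioi
    dsimp only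
    rw [Real.rpow_natCast, abs_of_pos hx]
  rw [← integrableOn_univ, ← Set.Iio_union_Ici (a := (0:ℝ)), integrableOn_union,
    integrableOn_Ici_iff_integrableOn_Ioi]
  refine ⟨?_, hIoi⟩
  rw [← (Measure.measurePreserving_neg (volume : Measure ℝ)).integrableOn_comp_preimage
      (Homeomorph.neg ℝ).measurableEmbedding]
  simpa [Function.comp_def, neg_sq, abs_neg] using hIoi

lemma aux_lintegral_abs_pow_gauss_lt_top (m : ℕ) :
    ∫⁻ x, ENNReal.ofReal (|x| ^ m) ∂(gaussianReal 0 1) < ⊤ := by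
  have hint : Integrable (fun x : ℝ => gaussianPDFReal 0 1 x * |x| ^ m) := by
    have h := (aux_integrable_abs_pow_gauss (b := 1/2) (by norm_num) m).const_mul
      (√(2 * Real.pi * ((1:ℝ≥0):ℝ)))⁻¹
    refine h.congr (Filter.Eventually.of_forall fun x => ?_)
    simp only [gaussianPDFReal, NNReal.coe_one, mul_one, sub_zero]
    rw [show -x^2/(2:ℝ) = -(1/2) * x^2 by ring]
    ring
  rw [gaussianReal_of_var_ne_zero 0 one_ne_zero,
    lintegral_withDensity_eq_lintegral_mul _ (measurable_gaussianPDF 0 1)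
      (by fun_prop)]
  have : ∀ x : ℝ, (gaussianPDF 0 1 * fun x => ENNReal.ofReal (|x| ^ m)) x
      = ENNReal.ofReal (gaussianPDFReal 0 1 x * |x| ^ m) := by
    intro x
    simp only [Pi.mul_apply, gaussianPDF]
    rw [← ENNReal.ofReal_mul (gaussianPDFReal_nonneg 0 1 x)]
  simp_rw [this]
  rw [← ofReal_integral_eq_lintegral_ofReal hint
    (Filter.Eventually.of_forall fun x => mul_nonneg (gaussianPDFReal_nonneg _ _ _) (by positivity))]
  exact ENNReal.ofReal_lt_top

lemma aux_gauss_scale (m : ℕ) (v : ℝ≥0) :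
    ∫⁻ x, ENNReal.ofReal (|x| ^ m) ∂(gaussianReal 0 v)
      = ENNReal.ofReal (Real.sqrt v ^ m) * ∫⁻ x, ENNReal.ofReal (|x| ^ m) ∂(gaussianReal 0 1) := by
  have hmap : (gaussianReal 0 1).map (fun x => Real.sqrt v * x) = gaussianReal 0 v := by
    rw [show (fun x : ℝ => Real.sqrt v * x) = (Real.sqrt v * ·) from rfl,
      gaussianReal_map_const_mul]
    congr 1
    · ring
    · ext
      simp [Real.sq_sqrt v.2]
  rw [← hmap, lintegral_map (by fun_prop)
    (measurable_const_mul _)]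
  simp_rw [abs_mul, abs_of_nonneg (Real.sqrt_nonneg _), mul_pow,
    ENNReal.ofReal_mul (pow_nonneg (Real.sqrt_nonneg _) m)]
  rw [lintegral_const_mul _ (by fun_prop)]

lemma aux_var (H : ℝ) (hH2 : 2*H ≠ 0) (s t : ℝ) :
    (∑ i : Fin 2, ∑ j : Fin 2,
      (![(-1:ℝ),1]) i * (![(-1:ℝ),1]) j * fbmCov H (![s,t] i) (![s,t] j)) = |t - s| ^ (2*H) := by
  simp only [Fin.sum_univ_two, fbmCov, Matrix.cons_val_zero, Matrix.cons_val_one, Matrix.head_cons,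
    sub_self, abs_zero, Real.zero_rpow hH2, abs_sub_comm s t]
  ring

theorem remainder_tendsto_zero_in_probability {Ω : Type*} [MeasurableSpace Ω]
    (P : Measure Ω) [IsProbabilityMeasure P]
    (ℓ : ℕ) (hℓ : 1 ≤ ℓ) (H : ℝ) (hH : H = 1/(4*(ℓ:ℝ)+2))
    (B : ℝ → Ω → ℝ)
    (hmeas : ∀ t, Measurable (B t))
    (hcont : ∀ ω, Continuous (fun t => B t ω))
    (hgauss : ∀ (k : ℕ) (t c : Fin k → ℝ), (∀ i, 0 ≤ t i) →
      Measure.map (fun ω => ∑ i, c i * B (t i) ω) P =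
        gaussianReal 0 (Real.toNNReal (∑ i, ∑ j, c i * c j * fbmCov H (t i) (t j))))
    (C : ℝ → ℝ → ℝ) (hC : Continuous (fun p : ℝ × ℝ => C p.1 p.2))
    (hCdiag : ∀ a : ℝ, C a a = 0)
    (T ε : ℝ) (hT : 0 < T) (hε : 0 < ε) :
    Filter.Tendsto (fun n : ℕ =>
      P {ω | ∃ t ∈ Set.Icc (0:ℝ) T,
        ε < |∑ j ∈ Finset.range ⌊(n:ℝ)*t⌋₊,
          C (B ((j:ℝ)/n) ω) (B (((j:ℝ)+1)/n) ω) *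
            (B (((j:ℝ)+1)/n) ω - B ((j:ℝ)/n) ω) ^ (4*ℓ+2)|})
      Filter.atTop (nhds 0) := by
  set m : ℕ := 4*ℓ+2 with hm_def
  have hm_even : Even m := ⟨2*ℓ+1, by omega⟩
  have hH_pos : 0 < H := by rw [hH]; positivity
  have hH2 : 2*H ≠ 0 := by positivity
  set c : ℝ≥0∞ := ∫⁻ x, ENNReal.ofReal (|x| ^ m) ∂(gaussianReal 0 1) with hc_def
  have hc_lt : c < ⊤ := aux_lintegral_abs_pow_gauss_lt_top m
  set N : ℕ → ℕ := fun n => ⌊(n:ℝ)*T⌋₊ with hN_def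
  set S : ℕ → Ω → ℝ := fun n ω => ∑ j ∈ Finset.range (N n),
      (B (((j:ℝ)+1)/n) ω - B ((j:ℝ)/n) ω) ^ m with hS_def
  have hS_nonneg : ∀ n ω, 0 ≤ S n ω := fun n ω =>
    Finset.sum_nonneg fun j _ => hm_even.pow_nonneg _
  have hS_meas : ∀ n, Measurable (S n) := fun n =>
    Finset.measurable_sum _ fun j _ => (((hmeas _).sub (hmeas _)).pow_const m)
  -- expectation bound
  have hlint : ∀ n : ℕ, 1 ≤ n → ∫⁻ ω, ENNReal.ofReal (S n ω) ∂P ≤ ENNReal.ofReal T * c := by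
    intro n hn
    have hn0 : (0:ℝ) < n := by exact_mod_cast hn
    have hterm : ∀ j : ℕ,
        ∫⁻ ω, ENNReal.ofReal ((B (((j:ℝ)+1)/n) ω - B ((j:ℝ)/n) ω) ^ m) ∂P
          = ENNReal.ofReal (1/(n:ℝ)) * c := by
      intro j
      set s : ℝ := (j:ℝ)/n with hs_def
      set t : ℝ := ((j:ℝ)+1)/n with ht_def
      have hts : t - s = 1/(n:ℝ) := by rw [hs_def, ht_def]; ring
      have hmap := hgauss 2 ![s,t] ![(-1:ℝ),1] (by
        intro i
        fin_cases i <;> simp [hs_def, ht_def] <;> positivity)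
      have hfun : (fun ω => ∑ i, (![(-1:ℝ),1]) i * B ((![s,t]) i) ω)
          = fun ω => B t ω - B s ω := by
        funext ω
        simp [Fin.sum_univ_two]
        ring
      rw [hfun, aux_var H hH2 s t, hts, abs_of_pos (by positivity : (0:ℝ) < 1/(n:ℝ))] at hmap
      have hgmeas : Measurable fun x : ℝ => ENNReal.ofReal (|x| ^ m) := by fun_prop
      calc ∫⁻ ω, ENNReal.ofReal ((B t ω - B s ω) ^ m) ∂P
          = ∫⁻ ω, ENNReal.ofReal (|B t ω - B s ω| ^ m) ∂P := by
            simp_rw [hm_even.pow_abs]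
        _ = ∫⁻ x, ENNReal.ofReal (|x| ^ m) ∂(P.map (fun ω => B t ω - B s ω)) :=
            (lintegral_map hgmeas ((hmeas t).sub (hmeas s))).symm
        _ = ∫⁻ x, ENNReal.ofReal (|x| ^ m)
              ∂(gaussianReal 0 (Real.toNNReal ((1/(n:ℝ)) ^ (2*H)))) := by rw [hmap]
        _ = ENNReal.ofReal (Real.sqrt ((Real.toNNReal ((1/(n:ℝ)) ^ (2*H))) : ℝ) ^ m) * c :=
            aux_gauss_scale m _
        _ = ENNReal.ofReal (1/(n:ℝ)) * c := by
            congr 2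
            have hcoe : ((Real.toNNReal ((1/(n:ℝ)) ^ (2*H)) : ℝ≥0) : ℝ) = (1/(n:ℝ)) ^ (2*H) :=
              Real.coe_toNNReal _ (Real.rpow_nonneg (by positivity) _)
            rw [hcoe, Real.sqrt_eq_rpow, ← Real.rpow_natCast (((1/(n:ℝ)) ^ (2*H)) ^ ((1:ℝ)/2)) m,
              ← Real.rpow_mul (by positivity), ← Real.rpow_mul (by positivity)]
            rw [show (2*H) * (1/2 * (m:ℝ)) = H * m by ring]
            have hHm : H * (m:ℝ) = 1 := by
              rw [hH, hm_def]
              have h2 : (4*(ℓ:ℝ)+2) ≠ 0 := by positivity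
              push_cast
              field_simp
            rw [hHm, Real.rpow_one]
    have hSsum : ∀ ω, ENNReal.ofReal (S n ω) = ∑ j ∈ Finset.range (N n),
        ENNReal.ofReal ((B (((j:ℝ)+1)/n) ω - B ((j:ℝ)/n) ω) ^ m) := fun ω =>
      ENNReal.ofReal_sum_of_nonneg fun j _ => hm_even.pow_nonneg _
    have hNn : (N n : ℝ) * (1/(n:ℝ)) ≤ T := by
      have h1 : (N n : ℝ) ≤ (n:ℝ) * T := Nat.floor_le (by positivity)
      rw [mul_one_div, div_le_iff₀ hn0]
      linarith [mul_comm (T:ℝ) (n:ℝ)]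
    calc ∫⁻ ω, ENNReal.ofReal (S n ω) ∂P
        = ∑ j ∈ Finset.range (N n),
            ∫⁻ ω, ENNReal.ofReal ((B (((j:ℝ)+1)/n) ω - B ((j:ℝ)/n) ω) ^ m) ∂P := by
          simp_rw [hSsum]
          exact lintegral_finset_sum _ fun j _ =>
            (((hmeas _).sub (hmeas _)).pow_const m).ennreal_ofReal
      _ = (N n : ℝ≥0∞) * (ENNReal.ofReal (1/(n:ℝ)) * c) := by
          simp [hterm, Finset.sum_const, nsmul_eq_mul]
      _ = ENNReal.ofReal ((N n : ℝ) * (1/(n:ℝ))) * c := by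
          rw [ENNReal.ofReal_mul (Nat.cast_nonneg _), ENNReal.ofReal_natCast, mul_assoc]
      _ ≤ ENNReal.ofReal T * c :=
          mul_le_mul_left (ENNReal.ofReal_le_ofReal hNn) c
  -- Markov
  have hMarkov : ∀ (M : ℝ), 0 < M → ∀ n : ℕ, 1 ≤ n →
      P {ω | M ≤ S n ω} ≤ (ENNReal.ofReal T * c) / ENNReal.ofReal M := by
    intro M hM n hn
    have h1 : {ω | M ≤ S n ω} = {ω | ENNReal.ofReal M ≤ ENNReal.ofReal (S n ω)} := by
      ext ω
      simp [ENNReal.ofReal_le_ofReal_iff (hS_nonneg n ω)]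
    rw [h1]
    refine le_trans (meas_ge_le_lintegral_div ((hS_meas n).ennreal_ofReal).aemeasurable
      (by simp [ENNReal.ofReal_eq_zero]; linarith) ENNReal.ofReal_ne_top) ?_
    exact ENNReal.div_le_div_right (hlint n hn) _
  -- measurability of the C-sets
  have hA_meas : ∀ (n : ℕ) (δ : ℝ),
      MeasurableSet {ω | ∃ j ∈ Finset.range (N n),
        δ ≤ |C (B ((j:ℝ)/n) ω) (B (((j:ℝ)+1)/n) ω)|} := by
    intro n δ
    have heq : {ω | ∃ j ∈ Finset.range (N n),
        δ ≤ |C (B ((j:ℝ)/n) ω) (B (((j:ℝ)+1)/n) ω)|}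
        = ⋃ j ∈ Finset.range (N n),
            {ω | δ ≤ |C (B ((j:ℝ)/n) ω) (B (((j:ℝ)+1)/n) ω)|} := by
      ext ω
      simp
    rw [heq]
    refine Set.Finite.measurableSet_biUnion (Finset.range (N n)).finite_toSet fun j _ => ?_
    have hg : Measurable fun ω => |C (B ((j:ℝ)/n) ω) (B (((j:ℝ)+1)/n) ω)| :=
      hC.abs.measurable.comp ((hmeas _).prodMk (hmeas _))
    exact hg measurableSet_Ici
  -- the C-sets have vanishing probability
  have hA_tendsto : ∀ δ : ℝ, 0 < δ → Filter.Tendsto (fun n => P {ω | ∃ j ∈ Finset.range (N n),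
      δ ≤ |C (B ((j:ℝ)/n) ω) (B (((j:ℝ)+1)/n) ω)|}) Filter.atTop (nhds 0) := by
    intro δ hδ
    have h0 : P (∅ : Set Ω) = 0 := measure_empty
    rw [← h0]
    refine tendsto_measure_of_tendsto_indicator_of_isFiniteMeasure (A := (∅ : Set Ω))
      Filter.atTop P (fun n => hA_meas n δ) (fun ω => ?_)
    simp only [Set.mem_empty_iff_false, iff_false, Set.mem_setOf_eq]
    have hcw : Continuous fun t => B t ω := hcont ω
    obtain ⟨R, hR⟩ := (isCompact_Icc (a := (0:ℝ)) (b := T)).exists_bound_of_continuousOn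
      hcw.continuousOn
    set R' : ℝ := max R 0 with hR'_def
    have hR' : ∀ s ∈ Set.Icc (0:ℝ) T, B s ω ∈ Set.Icc (-R') R' := by
      intro s hs
      have h1 : |B s ω| ≤ R := by
        have := hR s hs
        rwa [Real.norm_eq_abs] at this
      have h2 : |B s ω| ≤ R' := h1.trans (le_max_left _ _)
      exact ⟨neg_le_of_abs_le h2, le_of_abs_le h2⟩
    have hK : IsCompact ((Set.Icc (-R') R') ×ˢ (Set.Icc (-R') R')) :=
      isCompact_Icc.prod isCompact_Icc
    have hUC := hK.uniformContinuousOn_of_continuous hC.continuousOn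
    rw [Metric.uniformContinuousOn_iff] at hUC
    obtain ⟨γ, hγ0, hγ⟩ := hUC δ hδ
    have hUB := (isCompact_Icc (a := (0:ℝ)) (b := T)).uniformContinuousOn_of_continuous
      hcw.continuousOn
    rw [Metric.uniformContinuousOn_iff] at hUB
    obtain ⟨ρ, hρ0, hρ⟩ := hUB γ hγ0
    obtain ⟨n₀, hn₀⟩ := exists_nat_gt (1/ρ)
    filter_upwards [Filter.eventually_ge_atTop (max n₀ 1)] with n hn
    rintro ⟨j, hj, hjC⟩
    have hn1 : 1 ≤ n := le_trans (le_max_right _ _) hn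
    have hnpos : (0:ℝ) < n := by exact_mod_cast hn1
    have hjN : (j:ℝ) + 1 ≤ (n:ℝ) * T := by
      have h1 : j + 1 ≤ N n := Finset.mem_range.1 hj
      calc (j:ℝ)+1 ≤ (N n : ℝ) := by exact_mod_cast h1
        _ ≤ (n:ℝ)*T := Nat.floor_le (by positivity)
    have hs_mem : (j:ℝ)/n ∈ Set.Icc (0:ℝ) T := by
      constructor
      · positivity
      · rw [div_le_iff₀ hnpos]
        nlinarith [Nat.cast_nonneg (α := ℝ) j]
    have ht_mem : ((j:ℝ)+1)/n ∈ Set.Icc (0:ℝ) T := by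
      constructor
      · positivity
      · rw [div_le_iff₀ hnpos]
        nlinarith [Nat.cast_nonneg (α := ℝ) j]
    have hd : dist ((j:ℝ)/n) (((j:ℝ)+1)/n) < ρ := by
      rw [Real.dist_eq, show (j:ℝ)/n - ((j:ℝ)+1)/n = -(1/n) by ring, abs_neg,
        abs_of_pos (by positivity)]
      have hnn₀ : (n₀:ℝ) ≤ n := by exact_mod_cast le_trans (le_max_left _ _) hn
      rw [div_lt_iff₀ hnpos]
      have h2 : 1/ρ < (n:ℝ) := lt_of_lt_of_le hn₀ hnn₀
      rw [div_lt_iff₀ hρ0] at h2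
      nlinarith
    have hBB : dist (B ((j:ℝ)/n) ω) (B (((j:ℝ)+1)/n) ω) < γ := hρ _ hs_mem _ ht_mem hd
    have hab : ((B ((j:ℝ)/n) ω, B (((j:ℝ)+1)/n) ω) : ℝ × ℝ)
        ∈ (Set.Icc (-R') R') ×ˢ (Set.Icc (-R') R') := ⟨hR' _ hs_mem, hR' _ ht_mem⟩
    have hbb : ((B (((j:ℝ)+1)/n) ω, B (((j:ℝ)+1)/n) ω) : ℝ × ℝ)
        ∈ (Set.Icc (-R') R') ×ˢ (Set.Icc (-R') R') := ⟨hR' _ ht_mem, hR' _ ht_mem⟩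
    have hdist : dist ((B ((j:ℝ)/n) ω, B (((j:ℝ)+1)/n) ω) : ℝ × ℝ)
        ((B (((j:ℝ)+1)/n) ω, B (((j:ℝ)+1)/n) ω) : ℝ × ℝ) < γ := by
      rw [Prod.dist_eq]
      simpa [dist_self, dist_nonneg] using hBB
    have hfinal := hγ _ hab _ hbb hdist
    simp only [hCdiag, Real.dist_eq, sub_zero] at hfinal
    exact absurd hjC (not_le.2 hfinal)
  -- assembly
  rw [ENNReal.tendsto_nhds_zero]
  intro η hη
  set η' : ℝ≥0∞ := min η 1 with hη'_def
  have hη'0 : η' ≠ 0 := (lt_min hη zero_lt_one).ne'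
  have hη'top : η' ≠ ⊤ := ne_top_of_le_ne_top ENNReal.one_ne_top (min_le_right _ _)
  have hη'le : η' ≤ η := min_le_left _ _
  have hη2 : η'/2 ≠ 0 := by
    simp [ENNReal.div_eq_zero_iff, hη'0]
  have hη2top : η'/2 ≠ ⊤ := by
    simp only [ne_eq, ENNReal.div_eq_top]
    push_neg
    exact ⟨fun _ => by norm_num, fun h => absurd h hη'top⟩
  set A₀ : ℝ≥0∞ := ENNReal.ofReal T * c with hA₀_def
  have hA₀top : A₀ ≠ ⊤ := ENNReal.mul_ne_top ENNReal.ofReal_ne_top hc_lt.ne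
  set M : ℝ := (A₀ / (η'/2)).toReal + 1 with hM_def
  have hM_pos : 0 < M := add_pos_of_nonneg_of_pos ENNReal.toReal_nonneg one_pos
  have hMbound : A₀ / ENNReal.ofReal M ≤ η'/2 := by
    have hfin : A₀ / (η'/2) ≠ ⊤ := (ENNReal.div_lt_top hA₀top hη2).ne
    have h1 : A₀ / (η'/2) ≤ ENNReal.ofReal M := by
      rw [← ENNReal.ofReal_toReal hfin]
      exact ENNReal.ofReal_le_ofReal (by rw [hM_def]; linarith)
    have h2 : A₀ ≤ ENNReal.ofReal M * (η'/2) :=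
      (ENNReal.div_le_iff_le_mul (Or.inl hη2) (Or.inl hη2top)).1 h1
    refine (ENNReal.div_le_iff_le_mul (Or.inl ?_) (Or.inr ?_)).2 ?_
    · simp [ENNReal.ofReal_eq_zero]
      linarith
    · exact hη2
    · rwa [mul_comm] at h2
  set δ : ℝ := ε / M with hδ_def
  have hδ0 : 0 < δ := div_pos hε hM_pos
  have hδM : δ * M = ε := div_mul_cancel₀ ε hM_pos.ne'
  have hAev : ∀ᶠ n in Filter.atTop, P {ω | ∃ j ∈ Finset.range (N n),
      δ ≤ |C (B ((j:ℝ)/n) ω) (B (((j:ℝ)+1)/n) ω)|} ≤ η'/2 := by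
    have hpos : (0:ℝ≥0∞) < η'/2 := pos_iff_ne_zero.2 hη2
    filter_upwards [(hA_tendsto δ hδ0).eventually_lt_const hpos] with n hn
    exact hn.le
  filter_upwards [hAev, Filter.eventually_ge_atTop 1] with n hAn hn1
  have hsub : {ω | ∃ t ∈ Set.Icc (0:ℝ) T,
        ε < |∑ j ∈ Finset.range ⌊(n:ℝ)*t⌋₊,
          C (B ((j:ℝ)/n) ω) (B (((j:ℝ)+1)/n) ω) *
            (B (((j:ℝ)+1)/n) ω - B ((j:ℝ)/n) ω) ^ m|}
      ⊆ {ω | ∃ j ∈ Finset.range (N n), δ ≤ |C (B ((j:ℝ)/n) ω) (B (((j:ℝ)+1)/n) ω)|}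
        ∪ {ω | M ≤ S n ω} := by
    intro ω hω
    obtain ⟨t, ht, hlt⟩ := hω
    by_contra hcon
    rw [Set.mem_union] at hcon
    push_neg at hcon
    obtain ⟨hA, hB⟩ := hcon
    rw [Set.mem_setOf_eq] at hA hB
    push_neg at hA hB
    have hCj : ∀ j ∈ Finset.range (N n), |C (B ((j:ℝ)/n) ω) (B (((j:ℝ)+1)/n) ω)| ≤ δ :=
      fun j hj => (hA j hj).le
    have hSM : S n ω ≤ M := hB.le
    have hsubset : Finset.range ⌊(n:ℝ)*t⌋₊ ⊆ Finset.range (N n) :=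
      Finset.range_subset_range.2 (Nat.floor_le_floor (mul_le_mul_of_nonneg_left ht.2
        (Nat.cast_nonneg n)))
    have hbound : |∑ j ∈ Finset.range ⌊(n:ℝ)*t⌋₊,
        C (B ((j:ℝ)/n) ω) (B (((j:ℝ)+1)/n) ω) *
          (B (((j:ℝ)+1)/n) ω - B ((j:ℝ)/n) ω) ^ m| ≤ δ * M := by
      calc |∑ j ∈ Finset.range ⌊(n:ℝ)*t⌋₊,
          C (B ((j:ℝ)/n) ω) (B (((j:ℝ)+1)/n) ω) *
            (B (((j:ℝ)+1)/n) ω - B ((j:ℝ)/n) ω) ^ m|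
          ≤ ∑ j ∈ Finset.range ⌊(n:ℝ)*t⌋₊,
            |C (B ((j:ℝ)/n) ω) (B (((j:ℝ)+1)/n) ω) *
              (B (((j:ℝ)+1)/n) ω - B ((j:ℝ)/n) ω) ^ m| :=
            Finset.abs_sum_le_sum_abs _ _
        _ ≤ ∑ j ∈ Finset.range ⌊(n:ℝ)*t⌋₊,
            δ * (B (((j:ℝ)+1)/n) ω - B ((j:ℝ)/n) ω) ^ m := by
            refine Finset.sum_le_sum fun j hj => ?_
            rw [abs_mul, abs_of_nonneg (hm_even.pow_nonneg (B (((j:ℝ)+1)/n) ω - B ((j:ℝ)/n) ω))]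
            exact mul_le_mul_of_nonneg_right (hCj j (hsubset hj)) (hm_even.pow_nonneg _)
        _ ≤ ∑ j ∈ Finset.range (N n),
            δ * (B (((j:ℝ)+1)/n) ω - B ((j:ℝ)/n) ω) ^ m :=
            Finset.sum_le_sum_of_subset_of_nonneg hsubset fun j _ _ =>
              mul_nonneg hδ0.le (hm_even.pow_nonneg _)
        _ = δ * S n ω := by rw [hS_def, Finset.mul_sum]
        _ ≤ δ * M := mul_le_mul_of_nonneg_left hSM hδ0.le
    rw [hδM] at hbound
    exact absurd hlt (not_lt.2 hbound)
  calc P {ω | ∃ t ∈ Set.Icc (0:ℝ) T,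
        ε < |∑ j ∈ Finset.range ⌊(n:ℝ)*t⌋₊,
          C (B ((j:ℝ)/n) ω) (B (((j:ℝ)+1)/n) ω) *
            (B (((j:ℝ)+1)/n) ω - B ((j:ℝ)/n) ω) ^ m|}
      ≤ P ({ω | ∃ j ∈ Finset.range (N n), δ ≤ |C (B ((j:ℝ)/n) ω) (B (((j:ℝ)+1)/n) ω)|}
          ∪ {ω | M ≤ S n ω}) := measure_mono hsub
    _ ≤ P {ω | ∃ j ∈ Finset.range (N n), δ ≤ |C (B ((j:ℝ)/n) ω) (B (((j:ℝ)+1)/n) ω)|}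
          + P {ω | M ≤ S n ω} := measure_union_le _ _
    _ ≤ η'/2 + η'/2 := add_le_add hAn ((hMarkov M hM_pos n hn1).trans hMbound)
    _ = η' := ENNReal.add_halves η'
    _ ≤ η := hη'le
end
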